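/- If P and Q are removable Dyck paths of μ with P ≺ Q (Q covers P) that do not commute, then Q \ P decomposes as a disjoint union Q^1 ⊔ Q^2 of exactly two Dyck paths, both removable from μ - P, with Q^1 entirely to the left of P and Q^2 entirely to the right of P. -/

import Mathlib

namespace ArcPaper

/-- The content of a tile `(r, c)` (row `r`, column `c`, both `1`-indexed). -/
def cont (t : ℕ × ℕ) : ℤ := (t.1 : ℤ) - (t.2 : ℤ)

/-- `r + c - 1`, so that the height of the tile `(r, c)` in the `m × n` rectangle is
`lev t - m`. -/
def lev (t : ℕ × ℕ) : ℤ := (t.1 : ℤ) + (t.2 : ℤ) - 1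

/-- The Young diagram of a partition `μ` (given as the function `r ↦ μ r`, `1`-indexed). -/
def diagram (μ : ℕ → ℕ) : Set (ℕ × ℕ) := {t | 1 ≤ t.1 ∧ 1 ≤ t.2 ∧ t.2 ≤ μ t.1}

/-- A partition in the `m × n` rectangle: weakly decreasing, parts `≤ m`, at most `n` rows. -/
def IsPtn (m n : ℕ) (μ : ℕ → ℕ) : Prop :=
  (∀ i j, 1 ≤ i → i ≤ j → μ j ≤ μ i) ∧ μ 1 ≤ m ∧ ∀ r, n < r → μ r = 0

/-- One step of a path: the next tile is `(r+1, c)` or `(r, c-1)`. -/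
def IsStep (a b : ℕ × ℕ) : Prop := b = (a.1 + 1, a.2) ∨ (2 ≤ a.2 ∧ b = (a.1, a.2 - 1))

/-- `S` is the tile set of a (representative of a) Dyck path with first content `f`, last
content `l`, and height `h`, inside the `m × n` rectangle. -/
def IsDyckRep (m : ℕ) (S : Set (ℕ × ℕ)) (f l h : ℤ) : Prop :=
  ∃ (s : ℕ) (hs : 0 < s) (p : Fin s → ℕ × ℕ),
    Function.Injective p ∧ Set.range p = S ∧
    (∀ i : Fin s, ∀ hi : i.1 + 1 < s, IsStep (p i) (p ⟨i.1 + 1, hi⟩)) ∧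
    (∀ i : Fin s, lev (p ⟨0, hs⟩) ≤ lev (p i)) ∧
    (∀ i : Fin s, lev (p ⟨s - 1, Nat.sub_lt hs Nat.one_pos⟩) ≤ lev (p i)) ∧
    cont (p ⟨0, hs⟩) = f ∧ cont (p ⟨s - 1, Nat.sub_lt hs Nat.one_pos⟩) = l ∧
    lev (p ⟨0, hs⟩) - (m : ℤ) = h

/-- `ν` is obtained from `μ` by removing a Dyck path with contents `[f, l]` and height `h`. -/
def RemovesH (m n : ℕ) (μ : ℕ → ℕ) (f l h : ℤ) (ν : ℕ → ℕ) : Prop :=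
  ∃ S : Set (ℕ × ℕ), IsDyckRep m S f l h ∧ S ⊆ diagram μ ∧ IsPtn m n ν ∧
    diagram ν = diagram μ \ S

/-- `ν` is obtained from `μ` by removing a Dyck path with contents `[f, l]`. -/
def Removes (m n : ℕ) (μ : ℕ → ℕ) (f l : ℤ) (ν : ℕ → ℕ) : Prop :=
  ∃ h, RemovesH m n μ f l h ν

/-- The Dyck path with contents `[f, l]` is removable from `μ`, with height `h`. -/
def DRemH (m n : ℕ) (μ : ℕ → ℕ) (f l h : ℤ) : Prop := ∃ ν, RemovesH m n μ f l h ν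

/-- The Dyck path with contents `[f, l]` is removable from `μ`. -/
def DRem (m n : ℕ) (μ : ℕ → ℕ) (f l : ℤ) : Prop := ∃ ν, Removes m n μ f l ν

/-- The Dyck path with contents `[f, l]` is addable to `μ`, with height `h`. -/
def DAddH (m n : ℕ) (μ : ℕ → ℕ) (f l h : ℤ) : Prop :=
  ∃ ν, IsPtn m n ν ∧ RemovesH m n ν f l h μ

/-- The Dyck path with contents `[f, l]` is addable to `μ`. -/
def DAdd (m n : ℕ) (μ : ℕ → ℕ) (f l : ℤ) : Prop := ∃ h, DAddH m n μ f l h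

/-- Two removable Dyck paths of `μ` commute: each remains removable after the other has been
removed. -/
def DyckCommute (m n : ℕ) (μ : ℕ → ℕ) (P Q : ℤ × ℤ) : Prop :=
  (∃ ν, Removes m n μ P.1 P.2 ν ∧ DRem m n ν Q.1 Q.2) ∧
  (∃ ν, Removes m n μ Q.1 Q.2 ν ∧ DRem m n ν P.1 P.2)

/-- `P ≺ Q`: the Dyck path `Q` covers `P`, i.e. `first(Q) < first(P)` and
`last(P) < last(Q)`. -/
def DyckLt (P Q : ℤ × ℤ) : Prop := Q.1 < P.1 ∧ P.2 < Q.2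

/-- Two Dyck paths (as content intervals) are adjacent: the disjoint union of their content
multisets is an interval. -/
def DyckAdj (P Q : ℤ × ℤ) : Prop := P.2 + 1 = Q.1 ∨ Q.2 + 1 = P.1

/-- Two Dyck paths (as content intervals) are distant: all their contents differ by `≥ 2`. -/
def DyckDistant (P Q : ℤ × ℤ) : Prop := P.2 + 2 ≤ Q.1 ∨ Q.2 + 2 ≤ P.1

/-- The breadth `b(P) = (last(P) - first(P))/2 + 1` of a Dyck path. -/
def brN (P : ℤ × ℤ) : ℕ := ((P.2 - P.1) / 2 + 1).toNat

/-- A Dyck tiling of the skew shape `mu \ lam`: a finite set `T` of Dyck paths (identified by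
their content intervals), together with a choice `S` of tile-set representatives, which
partition `mu \ lam` and are pairwise nested or distant. -/
def IsDyckTiling (m n : ℕ) (lam mu : ℕ → ℕ) (T : Finset (ℤ × ℤ))
    (S : ℤ × ℤ → Set (ℕ × ℕ)) : Prop :=
  (∀ q ∈ T, ∃ h, IsDyckRep m (S q) q.1 q.2 h) ∧
  (∀ q ∈ T, ∀ q' ∈ T, q ≠ q' → Disjoint (S q) (S q')) ∧
  ((⋃ q ∈ T, S q) = diagram mu \ diagram lam) ∧
  (∀ q ∈ T, ∀ q' ∈ T, q ≠ q' → DyckLt q q' ∨ DyckLt q' q ∨ DyckDistant q q')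

/-- The staircase partition `(d, d-1, …, 2, 1)` is contained in `μ`. -/
def HasStaircase (d : ℕ) (μ : ℕ → ℕ) : Prop := ∀ i, 1 ≤ i → i ≤ d → d + 1 - i ≤ μ i

/-- `μ` has defect `d - m`: `d` is maximal with the staircase `(d, …, 1)` contained in `μ`. -/
def DefectIs (m : ℕ) (μ : ℕ → ℕ) (d : ℕ) : Prop :=
  HasStaircase d μ ∧ ¬ HasStaircase (d + 1) μ

/-- A regular partition of the `m × n` rectangle: a partition of defect `0`. -/
def Regular (m n : ℕ) (μ : ℕ → ℕ) : Prop := IsPtn m n μ ∧ DefectIs m μ m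

/-- The conjugate partition: `conj n μ i` is the number of (the at most `n`) rows of `μ` with
at least `i` boxes. -/
def conj (n : ℕ) (μ : ℕ → ℕ) (i : ℕ) : ℕ := ((Finset.Icc 1 n).filter fun r => i ≤ μ r).card

/-- Point `j ∈ {1, …, m+n}` of the weight of `μ` is labelled `∧`. -/
def IsUpPt (m n : ℕ) (μ : ℕ → ℕ) (j : ℤ) : Prop :=
  ∃ i : ℕ, 1 ≤ i ∧ i ≤ m ∧ j = (m : ℤ) + 1 - (i : ℤ) + (conj n μ i : ℤ)

/-- The number of `∧`-labelled points in positions `[a, b]` of the weight of `μ`. -/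
noncomputable def upCount (m n : ℕ) (μ : ℕ → ℕ) (a b : ℤ) : ℕ :=
  {j : ℤ | a ≤ j ∧ j ≤ b ∧ IsUpPt m n μ j}.ncard

/-- The number of `∨`-labelled points in positions `[a, b]` of the weight of `μ`. -/
noncomputable def downCount (m n : ℕ) (μ : ℕ → ℕ) (a b : ℤ) : ℕ :=
  {j : ℤ | a ≤ j ∧ j ≤ b ∧ ¬ IsUpPt m n μ j}.ncard

/-- `(i, j)` is a cup of the cup diagram `μ̲`: point `i` is `∨`, point `j` is `∧`, and the
points strictly between `i` and `j` form a balanced, completely matched configuration. -/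
def IsCup (m n : ℕ) (μ : ℕ → ℕ) (i j : ℤ) : Prop :=
  1 ≤ i ∧ j ≤ (m : ℤ) + (n : ℤ) ∧ i < j ∧ ¬ IsUpPt m n μ i ∧ IsUpPt m n μ j ∧
  upCount m n μ (i + 1) (j - 1) = downCount m n μ (i + 1) (j - 1) ∧
  ∀ k : ℤ, i < k → k < j → upCount m n μ (i + 1) k ≤ downCount m n μ (i + 1) k

/-- `R = rt(Q)`: the maximal-breadth element of the set of addable Dyck paths of `lam` of
height `1` lying strictly to the right of `Q`. -/
def IsRt (m n : ℕ) (lam : ℕ → ℕ) (Q R : ℤ × ℤ) : Prop :=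
  DAddH m n lam R.1 R.2 1 ∧ Q.2 < R.1 ∧
  ∀ R' : ℤ × ℤ, DAddH m n lam R'.1 R'.2 1 → Q.2 < R'.1 → brN R' ≤ brN R

/-- `R = ⟨P ∪ Q⟩_μ`: the smallest removable Dyck path of `μ` containing `P ∪ Q`. -/
def IsMerge (m n : ℕ) (μ : ℕ → ℕ) (P Q R : ℤ × ℤ) : Prop :=
  DRem m n μ R.1 R.2 ∧ R.1 ≤ P.1 ∧ P.2 ≤ R.2 ∧ R.1 ≤ Q.1 ∧ Q.2 ≤ R.2 ∧
  ∀ R' : ℤ × ℤ, DRem m n μ R'.1 R'.2 → R'.1 ≤ P.1 → P.2 ≤ R'.2 → R'.1 ≤ Q.1 → Q.2 ≤ R'.2 →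
    R'.1 ≤ R.1 ∧ R.2 ≤ R'.2

end ArcPaper

open ArcPaper

namespace ArcPaper

lemma part_le {m n : ℕ} {μ : ℕ → ℕ} (h : IsPtn m n μ) {r : ℕ} (hr : 1 ≤ r) : μ r ≤ m :=
  le_trans (h.1 1 r le_rfl hr) h.2.1

lemma diagram_dc {m n : ℕ} {μ : ℕ → ℕ} (h : IsPtn m n μ) {t s : ℕ × ℕ}
    (ht : t ∈ diagram μ) (h1 : 1 ≤ s.1) (h2 : 1 ≤ s.2) (h3 : s.1 ≤ t.1) (h4 : s.2 ≤ t.2) :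
    s ∈ diagram μ := by
  obtain ⟨a, b, c⟩ := ht
  exact ⟨h1, h2, le_trans (le_trans h4 c) (h.1 _ _ h1 h3)⟩

open scoped Classical in
lemma exists_ptn_diagram_eq {m n : ℕ} {μ : ℕ → ℕ} (hμ : IsPtn m n μ) (A : Set (ℕ × ℕ))
    (hA : A ⊆ diagram μ)
    (h1 : ∀ r c, 1 ≤ r → (r + 1, c) ∈ A → (r, c) ∈ A)
    (h2 : ∀ r c, 1 ≤ c → (r, c + 1) ∈ A → (r, c) ∈ A) :
    ∃ ν, IsPtn m n ν ∧ diagram ν = A := by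
  -- general closures
  have hrow : ∀ (d r c : ℕ), 1 ≤ r → (r + d, c) ∈ A → (r, c) ∈ A := by
    intro d
    induction d with
    | zero => intro r c _ h; simpa using h
    | succ d ih =>
      intro r c hr h
      exact ih r c hr (h1 (r + d) c (by omega) (by rwa [show r + d + 1 = r + (d+1) by omega]))
  have hcol : ∀ (d r c : ℕ), 1 ≤ c → (r, c + d) ∈ A → (r, c) ∈ A := by
    intro d
    induction d with
    | zero => intro r c _ h; simpa using h
    | succ d ih =>
      intro r c hc h
      exact ih r c hc (h2 r (c + d) (by omega) (by rwa [show c + d + 1 = c + (d+1) by omega]))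
  set F : ℕ → Finset ℕ := fun r => (Finset.Icc 1 m).filter (fun c => (r, c) ∈ A) with hF
  have key : ∀ r c, c ∈ F r ↔ (1 ≤ c ∧ c ≤ (F r).card) := by
    intro r c
    by_cases hne : (F r).Nonempty
    · set b := (F r).max' hne with hb
      have hbmem : b ∈ F r := (F r).max'_mem hne
      have hsub : F r ⊆ Finset.Icc 1 b := by
        intro x hx
        have hx' := Finset.mem_filter.1 hx
        have : 1 ≤ x := (Finset.mem_Icc.1 hx'.1).1
        exact Finset.mem_Icc.2 ⟨this, Finset.le_max' _ _ hx⟩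
      have hsup : Finset.Icc 1 b ⊆ F r := by
        intro x hx
        have hx' := Finset.mem_Icc.1 hx
        have hbA : (r, b) ∈ A := (Finset.mem_filter.1 hbmem).2
        have hxA : (r, x) ∈ A := by
          have := hcol (b - x) r x hx'.1
          apply this
          rwa [show x + (b - x) = b by omega]
        refine Finset.mem_filter.2 ⟨Finset.mem_Icc.2 ⟨hx'.1, ?_⟩, hxA⟩
        exact le_trans hx'.2 (Finset.mem_Icc.1 (Finset.mem_filter.1 hbmem).1).2
      have heq : F r = Finset.Icc 1 b := le_antisymm hsub hsup
      rw [heq, Nat.card_Icc]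
      simp only [Finset.mem_Icc]
      omega
    · rw [Finset.not_nonempty_iff_eq_empty] at hne
      rw [hne]
      simp only [Finset.notMem_empty, Finset.card_empty, false_iff, not_and]
      omega
  refine ⟨fun r => (F r).card, ⟨?_, ?_, ?_⟩, ?_⟩
  · intro i j hi hij
    apply Finset.card_le_card
    intro c hc
    have hc' := Finset.mem_filter.1 hc
    refine Finset.mem_filter.2 ⟨hc'.1, ?_⟩
    have := hrow (j - i) i c hi
    apply this
    rw [show i + (j - i) = j by omega]
    exact hc'.2
  · calc (F 1).card ≤ (Finset.Icc 1 m).card := Finset.card_le_card (Finset.filter_subset _ _)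
      _ = m := by rw [Nat.card_Icc]; omega
  · intro r hr
    have : F r = ∅ := by
      rw [Finset.eq_empty_iff_forall_notMem]
      intro c hc
      have hc' := (Finset.mem_filter.1 hc).2
      have := hA hc'
      obtain ⟨x1, x2, x3⟩ := this
      have h0 : μ r = 0 := hμ.2.2 r hr
      simp only [] at x3
      rw [h0] at x3
      omega
    simp [this]
  · ext ⟨r, c⟩
    constructor
    · rintro ⟨x1, x2, x3⟩
      exact ((key r c).2 ⟨x2, x3⟩ : c ∈ F r) |> Finset.mem_filter.1 |>.2
    · intro h
      have hd := hA h
      obtain ⟨y1, y2, y3⟩ := hd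
      have hcm : c ≤ m := le_trans y3 (part_le hμ y1)
      have : c ∈ F r := Finset.mem_filter.2 ⟨Finset.mem_Icc.2 ⟨y2, hcm⟩, h⟩
      exact ⟨y1, y2, ((key r c).1 this).2⟩

end ArcPaper

namespace ArcPaper

lemma cont_of_step {a b : ℕ × ℕ} (h : IsStep a b) : cont b = cont a + 1 := by
  rcases h with h | ⟨h2, h⟩ <;> subst h <;> simp only [cont] <;> omega

lemma removes_struct {m n : ℕ} {μ ν : ℕ → ℕ} {f l : ℤ} (hμ : IsPtn m n μ)
    (h : Removes m n μ f l ν) :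
    ∃ B : ℤ → ℕ × ℕ,
      IsPtn m n ν ∧ f ≤ l ∧
      (∀ k, f ≤ k → k ≤ l → B k ∈ diagram μ) ∧
      (∀ k, f ≤ k → k ≤ l → cont (B k) = k) ∧
      (diagram ν = diagram μ \ {t | ∃ k, f ≤ k ∧ k ≤ l ∧ B k = t}) ∧
      (∀ k, f ≤ k → k < l →
        B (k + 1) = ((B k).1 + 1, (B k).2) ∨ (2 ≤ (B k).2 ∧ B (k + 1) = ((B k).1, (B k).2 - 1))) ∧
      (∀ k, f ≤ k → k ≤ l → lev (B f) ≤ lev (B k) ∧ lev (B l) ≤ lev (B k)) ∧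
      (∀ k, f ≤ k → k ≤ l → ((B k).1, (B k).2 + 1) ∈ diagram μ →
        f ≤ k - 1 ∧ B (k - 1) = ((B k).1, (B k).2 + 1)) ∧
      (∀ k, f ≤ k → k ≤ l → ((B k).1 + 1, (B k).2) ∈ diagram μ →
        k + 1 ≤ l ∧ B (k + 1) = ((B k).1 + 1, (B k).2)) := by
  obtain ⟨h', S, ⟨s, hs, p, hinj, hrange, hsteps, hminf, hminl, hcf, hcl, hht⟩, hSsub, hν, hdiag⟩ := h
  have hcont : ∀ i : ℕ, ∀ hi : i < s, cont (p ⟨i, hi⟩) = f + i := by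
    intro i
    induction i with
    | zero => intro hi; simpa using hcf
    | succ i ih =>
      intro hi
      have hst := hsteps ⟨i, by omega⟩ (by simpa using hi)
      have := cont_of_step hst
      rw [this, ih (by omega)]
      push_cast
      ring
  have hlast : l = f + ((s - 1 : ℕ) : ℤ) := by
    have h1 := hcont (s - 1) (Nat.sub_lt hs Nat.one_pos)
    rw [hcl] at h1
    omega
  have hfl : f ≤ l := by omega
  have hidx : ∀ k, f ≤ k → k ≤ l → (k - f).toNat < s := by intro k hf hl; omega
  set B : ℤ → ℕ × ℕ := fun k => p ⟨(k - f).toNat % s, Nat.mod_lt _ hs⟩ with hBdef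
  have hB : ∀ k (hf : f ≤ k) (hl : k ≤ l), B k = p ⟨(k - f).toNat, hidx k hf hl⟩ := by
    intro k hf hl
    simp only [hBdef]
    congr 1
    exact Fin.ext (Nat.mod_eq_of_lt (hidx k hf hl))
  have hBcont : ∀ k, f ≤ k → k ≤ l → cont (B k) = k := by
    intro k hf hl
    rw [hB k hf hl, hcont _ (hidx k hf hl)]
    omega
  have hBS : ∀ k, f ≤ k → k ≤ l → B k ∈ S := by
    intro k hf hl
    rw [hB k hf hl, ← hrange]
    exact ⟨_, rfl⟩
  have hBμ : ∀ k, f ≤ k → k ≤ l → B k ∈ diagram μ := fun k hf hl => hSsub (hBS k hf hl)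
  have hSB : S = {t | ∃ k, f ≤ k ∧ k ≤ l ∧ B k = t} := by
    ext t
    constructor
    · intro ht
      rw [← hrange] at ht
      obtain ⟨i, rfl⟩ := ht
      refine ⟨f + i.1, by omega, by omega, ?_⟩
      rw [hB (f + i.1) (by omega) (by omega)]
      congr 1
      apply Fin.ext
      show (f + (i.1 : ℤ) - f).toNat = i.1
      omega
    · rintro ⟨k, h1, h2, rfl⟩
      exact hBS k h1 h2
  -- membership in S forces not in ν
  have hSnotν : ∀ t ∈ S, t ∉ diagram ν := by
    intro t ht hν'
    rw [hdiag] at hν'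
    exact hν'.2 ht
  -- star lemma
  have hstar : ∀ k, f ≤ k → k ≤ l → ∀ t : ℕ × ℕ, t ∈ diagram μ →
      t.1 = (B k).1 + 1 ∧ t.2 = (B k).2 ∨ t.1 = (B k).1 ∧ t.2 = (B k).2 + 1 →
      t ∈ S := by
    intro k hf hl t htμ hrel
    by_contra htS
    have htν : t ∈ diagram ν := by rw [hdiag]; exact ⟨htμ, htS⟩
    have hBν : B k ∈ diagram ν := by
      have hBd := hBμ k hf hl
      apply diagram_dc hν htν hBd.1 hBd.2.1 <;> omega
    exact hSnotν _ (hBS k hf hl) hBν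
  have hN1 : ∀ k, f ≤ k → k ≤ l → ((B k).1, (B k).2 + 1) ∈ diagram μ →
      f ≤ k - 1 ∧ B (k - 1) = ((B k).1, (B k).2 + 1) := by
    intro k hf hl hnb
    have hin : ((B k).1, (B k).2 + 1) ∈ S := hstar k hf hl _ hnb (Or.inr ⟨rfl, rfl⟩)
    rw [hSB] at hin
    obtain ⟨k', h1, h2, h3⟩ := hin
    have hc := hBcont k' h1 h2
    rw [h3] at hc
    have hck : cont ((B k).1, (B k).2 + 1) = k - 1 := by
      have := hBcont k hf hl
      simp only [cont] at this ⊢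
      push_cast
      omega
    rw [hck] at hc
    subst hc
    exact ⟨h1, h3⟩
  have hN2 : ∀ k, f ≤ k → k ≤ l → ((B k).1 + 1, (B k).2) ∈ diagram μ →
      k + 1 ≤ l ∧ B (k + 1) = ((B k).1 + 1, (B k).2) := by
    intro k hf hl hnb
    have hin : ((B k).1 + 1, (B k).2) ∈ S := hstar k hf hl _ hnb (Or.inl ⟨rfl, rfl⟩)
    rw [hSB] at hin
    obtain ⟨k', h1, h2, h3⟩ := hin
    have hc := hBcont k' h1 h2
    rw [h3] at hc
    have hck : cont ((B k).1 + 1, (B k).2) = k + 1 := by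
      have := hBcont k hf hl
      simp only [cont] at this ⊢
      push_cast
      omega
    rw [hck] at hc
    subst hc
    exact ⟨h2, h3⟩
  have hBf : B f = p ⟨0, hs⟩ := by
    rw [hB f le_rfl hfl]
    congr 1
    exact Fin.mk_eq_mk.2 (by omega)
  have hBl : B l = p ⟨s - 1, Nat.sub_lt hs Nat.one_pos⟩ := by
    rw [hB l hfl le_rfl]
    congr 1
    exact Fin.mk_eq_mk.2 (by omega)
  refine ⟨B, hν, hfl, hBμ, hBcont, by rw [hdiag, hSB], ?_, ?_, hN1, hN2⟩
  · intro k hf hl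
    have h1 := hB k hf (le_of_lt hl)
    have h2 := hB (k + 1) (by omega) (by omega)
    have hst := hsteps ⟨(k - f).toNat, hidx k hf (le_of_lt hl)⟩
      (by have := hidx (k+1) (by omega) (by omega); simp only [] ; omega)
    rw [← h1] at hst
    have : B (k + 1) = p ⟨(k - f).toNat + 1, by have := hidx (k+1) (by omega) (by omega); omega⟩ := by
      rw [h2]; congr 1; exact Fin.mk_eq_mk.2 (by omega)
    rw [← this] at hst
    exact hst
  · intro k hf hl
    constructor
    · rw [hBf, hB k hf hl]; exact hminf _
    · rw [hBl, hB k hf hl]; exact hminl _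

end ArcPaper

namespace ArcPaper

lemma removes_construct {m n : ℕ} {μ : ℕ → ℕ} {f l : ℤ} (hμ : IsPtn m n μ)
    (B : ℤ → ℕ × ℕ) (hfl : f ≤ l)
    (hmem : ∀ k, f ≤ k → k ≤ l → B k ∈ diagram μ)
    (hcont : ∀ k, f ≤ k → k ≤ l → cont (B k) = k)
    (hstep : ∀ k, f ≤ k → k < l →
      B (k + 1) = ((B k).1 + 1, (B k).2) ∨ (2 ≤ (B k).2 ∧ B (k + 1) = ((B k).1, (B k).2 - 1)))
    (hminf : ∀ k, f ≤ k → k ≤ l → lev (B f) ≤ lev (B k))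
    (hminl : ∀ k, f ≤ k → k ≤ l → lev (B l) ≤ lev (B k))
    (hRC : ∀ k, f ≤ k → k ≤ l → ((B k).1, (B k).2 + 1) ∈ diagram μ →
      ∃ k', f ≤ k' ∧ k' ≤ l ∧ B k' = ((B k).1, (B k).2 + 1))
    (hUC : ∀ k, f ≤ k → k ≤ l → ((B k).1 + 1, (B k).2) ∈ diagram μ →
      ∃ k', f ≤ k' ∧ k' ≤ l ∧ B k' = ((B k).1 + 1, (B k).2)) :
    DRem m n μ f l := by
  set S : Set (ℕ × ℕ) := {t | ∃ k, f ≤ k ∧ k ≤ l ∧ B k = t} with hSdef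
  have hSsub : S ⊆ diagram μ := by
    rintro t ⟨k, h1, h2, rfl⟩
    exact hmem k h1 h2
  set A : Set (ℕ × ℕ) := diagram μ \ S with hAdef
  have h1 : ∀ r c, 1 ≤ r → (r + 1, c) ∈ A → (r, c) ∈ A := by
    rintro r c hr ⟨hd, hnS⟩
    constructor
    · exact diagram_dc hμ hd hr hd.2.1 (by omega) le_rfl
    · rintro ⟨k, hk1, hk2, hk3⟩
      apply hnS
      have : ((B k).1 + 1, (B k).2) ∈ diagram μ := by rw [hk3]; exact hd
      obtain ⟨k', a1, a2, a3⟩ := hUC k hk1 hk2 this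
      exact ⟨k', a1, a2, by rw [a3, hk3]⟩
  have h2 : ∀ r c, 1 ≤ c → (r, c + 1) ∈ A → (r, c) ∈ A := by
    rintro r c hc ⟨hd, hnS⟩
    constructor
    · exact diagram_dc hμ hd hd.1 hc le_rfl (by omega)
    · rintro ⟨k, hk1, hk2, hk3⟩
      apply hnS
      have : ((B k).1, (B k).2 + 1) ∈ diagram μ := by rw [hk3]; exact hd
      obtain ⟨k', a1, a2, a3⟩ := hRC k hk1 hk2 this
      exact ⟨k', a1, a2, by rw [a3, hk3]⟩
  obtain ⟨ν, hν, hνdiag⟩ := exists_ptn_diagram_eq hμ A (Set.diff_subset) h1 h2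
  set s : ℕ := (l - f + 1).toNat with hsdef
  have hs : 0 < s := by omega
  set p : Fin s → ℕ × ℕ := fun i => B (f + i.1) with hpdef
  have hrange : ∀ i : Fin s, f ≤ f + (i.1 : ℤ) ∧ f + (i.1 : ℤ) ≤ l := by
    intro i
    have := i.2
    constructor <;> omega
  have hpcont : ∀ i : Fin s, cont (p i) = f + i.1 := fun i =>
    hcont _ (hrange i).1 (hrange i).2
  have hinj : Function.Injective p := by
    intro i j hij
    have h1 := hpcont i
    have h2 := hpcont j
    rw [hij] at h1
    apply Fin.ext
    omega
  have hp0 : p ⟨0, hs⟩ = B f := by simp only [hpdef]; norm_num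
  have hpl : p ⟨s - 1, Nat.sub_lt hs Nat.one_pos⟩ = B l := by
    simp only [hpdef]
    congr 1
    have : ((s - 1 : ℕ) : ℤ) = l - f := by omega
    rw [this]; ring
  refine ⟨ν, lev (B f) - m, S, ⟨s, hs, p, hinj, ?_, ?_, ?_, ?_, ?_, ?_, by rw [hp0]⟩, hSsub, hν, by rw [hνdiag]⟩
  · ext t
    constructor
    · rintro ⟨i, rfl⟩
      exact ⟨f + i.1, (hrange i).1, (hrange i).2, rfl⟩
    · rintro ⟨k, hk1, hk2, rfl⟩
      refine ⟨⟨(k - f).toNat, by omega⟩, ?_⟩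
      simp only [hpdef]
      congr 1
      show f + (((k - f).toNat : ℕ) : ℤ) = k
      omega
  · intro i hi
    have hst := hstep (f + i.1) (by omega) (by have := hrange ⟨i.1 + 1, hi⟩; simp only [] at this; omega)
    have heq : p ⟨i.1 + 1, hi⟩ = B (f + i.1 + 1) := by
      simp only [hpdef]
      congr 1
      push_cast
      ring
    rw [heq]
    exact hst
  · intro i
    rw [hp0]
    exact hminf _ (hrange i).1 (hrange i).2
  · intro i
    rw [hpl]
    exact hminl _ (hrange i).1 (hrange i).2
  · rw [hp0]
    exact hcont f le_rfl hfl
  · rw [hpl]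
    exact hcont l hfl le_rfl

end ArcPaper

namespace ArcPaper

lemma outer_unique {m n : ℕ} {μ : ℕ → ℕ} (hμ : IsPtn m n μ) {t t' : ℕ × ℕ}
    (h1 : t ∈ diagram μ) (h2 : (t.1 + 1, t.2 + 1) ∉ diagram μ)
    (h3 : t' ∈ diagram μ) (h4 : (t'.1 + 1, t'.2 + 1) ∉ diagram μ)
    (hc : cont t = cont t') : t = t' := by
  simp only [cont] at hc
  obtain ⟨a1, a2, a3⟩ := h1
  obtain ⟨b1, b2, b3⟩ := h3
  rcases lt_trichotomy t.1 t'.1 with h | h | h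
  · exact absurd (diagram_dc hμ ⟨b1, b2, b3⟩ (by omega) (by omega) (by omega) (by omega)) h2
  · have : t.2 = t'.2 := by omega
    exact Prod.ext h this
  · exact absurd (diagram_dc hμ ⟨a1, a2, a3⟩ (by omega) (by omega) (by omega) (by omega)) h4

lemma struct_outer {m n : ℕ} {μ ν : ℕ → ℕ} {f l : ℤ} {B : ℤ → ℕ × ℕ}
    (hμ : IsPtn m n μ) (hν : IsPtn m n ν)
    (hmem : ∀ k, f ≤ k → k ≤ l → B k ∈ diagram μ)
    (hcont : ∀ k, f ≤ k → k ≤ l → cont (B k) = k)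
    (hdiag : diagram ν = diagram μ \ {t | ∃ k, f ≤ k ∧ k ≤ l ∧ B k = t})
    (hN2 : ∀ k, f ≤ k → k ≤ l → ((B k).1 + 1, (B k).2) ∈ diagram μ →
      k + 1 ≤ l ∧ B (k + 1) = ((B k).1 + 1, (B k).2)) :
    ∀ k, f ≤ k → k ≤ l → ((B k).1 + 1, (B k).2 + 1) ∉ diagram μ := by
  intro k hf hl hd
  have hm := hmem k hf hl
  have hdown : ((B k).1 + 1, (B k).2) ∈ diagram μ :=
    diagram_dc hμ hd (by omega) (by exact hm.2.1) le_rfl (by omega)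
  obtain ⟨hkl, heq⟩ := hN2 k hf hl hdown
  by_cases hv : ((B k).1 + 1, (B k).2 + 1) ∈ diagram ν
  · have hdn : ((B k).1 + 1, (B k).2) ∈ diagram ν :=
      diagram_dc hν hv (by omega) (by exact hm.2.1) le_rfl (by omega)
    rw [hdiag] at hdn
    exact hdn.2 ⟨k + 1, by omega, hkl, heq⟩
  · rw [hdiag] at hv
    have hvS : ((B k).1 + 1, (B k).2 + 1) ∈ {t | ∃ k, f ≤ k ∧ k ≤ l ∧ B k = t} := by
      by_contra hns
      exact hv ⟨hd, hns⟩
    obtain ⟨k', c1, c2, c3⟩ := hvS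
    have e1 := hcont k' c1 c2
    have e2 := hcont k hf hl
    rw [c3] at e1
    simp only [cont] at e1 e2
    push_cast at e1
    have : k' = k := by omega
    subst this
    have f1 := congrArg Prod.fst c3
    simp only [] at f1
    omega

lemma step_coords {B : ℤ → ℕ × ℕ} {k : ℤ}
    (h : B (k + 1) = ((B k).1 + 1, (B k).2) ∨ (2 ≤ (B k).2 ∧ B (k + 1) = ((B k).1, (B k).2 - 1))) :
    ((B (k+1)).1 = (B k).1 + 1 ∧ (B (k+1)).2 = (B k).2) ∨
    ((B (k+1)).1 = (B k).1 ∧ (B (k+1)).2 + 1 = (B k).2 ∧ 2 ≤ (B k).2) := by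
  rcases h with h | ⟨h2, h⟩
  · left; rw [h]; exact ⟨rfl, rfl⟩
  · right; rw [h]; exact ⟨rfl, by omega, h2⟩

lemma chains {f l : ℤ} {B : ℤ → ℕ × ℕ}
    (hstep : ∀ k, f ≤ k → k < l →
      B (k + 1) = ((B k).1 + 1, (B k).2) ∨ (2 ≤ (B k).2 ∧ B (k + 1) = ((B k).1, (B k).2 - 1))) :
    ∀ k k', f ≤ k → k ≤ k' → k' ≤ l →
      (((B k').2 : ℤ) - ((B k).2 : ℤ) ≤ lev (B k') - lev (B k) ∧
       lev (B k') - lev (B k) ≤ ((B k').1 : ℤ) - ((B k).1 : ℤ)) := by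
  intro k k' hfk hkk' hk'l
  have key : ∀ j : ℤ, k ≤ j → j ≤ l →
      (((B j).2 : ℤ) - ((B k).2 : ℤ) ≤ lev (B j) - lev (B k) ∧
       lev (B j) - lev (B k) ≤ ((B j).1 : ℤ) - ((B k).1 : ℤ)) := by
    refine fun j hj => Int.le_induction (motive := fun j _ => j ≤ l →
      (((B j).2 : ℤ) - ((B k).2 : ℤ) ≤ lev (B j) - lev (B k) ∧
       lev (B j) - lev (B k) ≤ ((B j).1 : ℤ) - ((B k).1 : ℤ))) ?_ ?_ j hj
    · intro _; omega
    · intro j hj ih hjl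
      have hih := ih (by omega)
      have hsc := step_coords (hstep j (by omega) (by omega))
      simp only [lev] at hih ⊢
      rcases hsc with ⟨a, b⟩ | ⟨a, b, c⟩ <;> omega
  exact key k' hkk' hk'l

lemma lev_eq {t : ℕ × ℕ} : lev t = (t.1 : ℤ) + (t.2 : ℤ) - 1 := rfl

lemma cont_eq {t : ℕ × ℕ} : cont t = (t.1 : ℤ) - (t.2 : ℤ) := rfl

end ArcPaper

set_option maxHeartbeats 1000000 in
/-- If `P` and `Q` are removable Dyck paths of `μ` with `P ≺ Q` (`Q` covers `P`) that do not
commute, then `Q \ P` decomposes as a disjoint union of exactly two Dyck paths `Q¹ ⊔ Q²`,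
both removable from `μ - P`, with `Q¹` (content interval `[first(Q), first(P) - 1]`) entirely
to the left of `P` and `Q²` (content interval `[last(P) + 1, last(Q)]`) entirely to the right
of `P`. -/
theorem stmt12 (m n : ℕ) (μ : ℕ → ℕ) (hμ : IsPtn m n μ) (P Q : ℤ × ℤ)
    (hP : DRem m n μ P.1 P.2) (hQ : DRem m n μ Q.1 Q.2)
    (hcov : DyckLt P Q)
    (hnc : ¬ DyckCommute m n μ P Q) :
    (Set.Icc Q.1 Q.2 \ Set.Icc P.1 P.2 =
      Set.Icc Q.1 (P.1 - 1) ∪ Set.Icc (P.2 + 1) Q.2) ∧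
    ∀ ν, Removes m n μ P.1 P.2 ν →
      DRem m n ν Q.1 (P.1 - 1) ∧ DRem m n ν (P.2 + 1) Q.2 := by
  obtain ⟨hc1, hc2⟩ := hcov
  have hPint : P.1 ≤ P.2 := by
    obtain ⟨ν0, h0⟩ := hP
    obtain ⟨_, _, this, _⟩ := removes_struct hμ h0
    exact this
  refine ⟨by ext x; simp only [Set.mem_diff, Set.mem_Icc, Set.mem_union]; omega, ?_⟩
  intro ν hν
  obtain ⟨BP, hνptn, -, hPmem, hPcont, hPdiag, hPstep, hPlev, hPN1, hPN2⟩ := removes_struct hμ hν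
  obtain ⟨νQ, hQrem⟩ := hQ
  obtain ⟨BQ, hνQptn, -, hQmem, hQcont, hQdiag, hQstep, hQlev, hQN1, hQN2⟩ :=
    removes_struct hμ hQrem
  have hPout := struct_outer hμ hνptn hPmem hPcont hPdiag hPN2
  have hQout := struct_outer hμ hνQptn hQmem hQcont hQdiag hQN2
  have hagree : ∀ k, P.1 ≤ k → k ≤ P.2 → BP k = BQ k := fun k h1 h2 =>
    outer_unique hμ (hPmem k h1 h2) (hPout k h1 h2) (hQmem k (by omega) (by omega))
      (hQout k (by omega) (by omega))
      (by rw [hPcont k h1 h2, hQcont k (by omega) (by omega)])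
  have hSPnot : ∀ k, P.1 ≤ k → k ≤ P.2 → BQ k ∉ diagram ν := by
    intro k h1 h2 hmem'
    rw [hPdiag] at hmem'
    exact hmem'.2 ⟨k, h1, h2, hagree k h1 h2⟩
  have hνsub : diagram ν ⊆ diagram μ := by rw [hPdiag]; exact Set.diff_subset
  have hmemν : ∀ k, Q.1 ≤ k → k ≤ Q.2 → (k < P.1 ∨ P.2 < k) → BQ k ∈ diagram ν := by
    intro k h1 h2 h3
    rw [hPdiag]
    refine ⟨hQmem k h1 h2, ?_⟩
    rintro ⟨k', a1, a2, a3⟩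
    have := hPcont k' a1 a2
    rw [a3, hQcont k h1 h2] at this
    omega
  -- F1 : the Q-path steps down into first(P)
  have hF1 : BQ P.1 = ((BQ (P.1 - 1)).1 + 1, (BQ (P.1 - 1)).2) := by
    have hst := hQstep (P.1 - 1) (by omega) (by omega)
    rw [show P.1 - 1 + 1 = P.1 by ring] at hst
    rcases hst with h | ⟨h2, h⟩
    · exact h
    · exfalso
      have f1 : (BQ P.1).1 = (BQ (P.1 - 1)).1 := by rw [h]
      have f2 : (BQ P.1).2 = (BQ (P.1 - 1)).2 - 1 := by rw [h]
      have e : ((BP P.1).1, (BP P.1).2 + 1) = BQ (P.1 - 1) := by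
        rw [hagree P.1 le_rfl hPint]
        apply Prod.ext <;> dsimp only <;> omega
      have := hPN1 P.1 le_rfl hPint (by rw [e]; exact hQmem (P.1 - 1) (by omega) (by omega))
      omega
  -- F2 : the Q-path steps left out of last(P)
  have hF2 : 2 ≤ (BQ P.2).2 ∧ BQ (P.2 + 1) = ((BQ P.2).1, (BQ P.2).2 - 1) := by
    have hst := hQstep P.2 (by omega) (by omega)
    rcases hst with h | ⟨h2, h⟩
    · exfalso
      have e : ((BP P.2).1 + 1, (BP P.2).2) = BQ (P.2 + 1) := by
        rw [hagree P.2 hPint le_rfl]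
        have f1 : (BQ (P.2 + 1)).1 = (BQ P.2).1 + 1 := by rw [h]
        have f2 : (BQ (P.2 + 1)).2 = (BQ P.2).2 := by rw [h]
        apply Prod.ext <;> dsimp only <;> omega
      have := hPN2 P.2 hPint le_rfl (by rw [e]; exact hQmem (P.2 + 1) (by omega) (by omega))
      omega
    · exact ⟨h2, h⟩
  -- level bookkeeping
  have hHpq : lev (BQ P.2) = lev (BQ P.1) := by
    rw [← hagree P.2 hPint le_rfl, ← hagree P.1 le_rfl hPint]
    exact le_antisymm ((hPlev P.1 le_rfl hPint).2) ((hPlev P.2 hPint le_rfl).1)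
  have hlevP : ∀ k, P.1 ≤ k → k ≤ P.2 → lev (BQ P.1) ≤ lev (BQ k) := by
    intro k h1 h2
    rw [← hagree P.1 le_rfl hPint, ← hagree k h1 h2]
    exact (hPlev k h1 h2).1
  have hHq : lev (BQ Q.1) = lev (BQ Q.2) :=
    le_antisymm ((hQlev Q.2 (by omega) le_rfl).1) ((hQlev Q.1 le_rfl (by omega)).2)
  have hlF1 : lev (BQ (P.1 - 1)) + 1 = lev (BQ P.1) := by
    have f1 : (BQ P.1).1 = (BQ (P.1 - 1)).1 + 1 := by rw [hF1]
    have f2 : (BQ P.1).2 = (BQ (P.1 - 1)).2 := by rw [hF1]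
    simp only [lev]
    omega
  have hlF2 : lev (BQ (P.2 + 1)) + 1 = lev (BQ P.2) := by
    have f1 : (BQ (P.2 + 1)).1 = (BQ P.2).1 := by rw [hF2.2]
    have f2 : (BQ (P.2 + 1)).2 = (BQ P.2).2 - 1 := by rw [hF2.2]
    have := hF2.1
    simp only [lev]
    omega
  by_cases hcase : lev (BQ P.1) ≤ lev (BQ Q.1) + 1
  · constructor
    · -- Q¹ = [Q.1, P.1 - 1]
      refine removes_construct hνptn BQ (by omega)
        (fun k h1 h2 => hmemν k h1 (by omega) (by omega))
        (fun k h1 h2 => hQcont k h1 (by omega))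
        (fun k h1 h2 => hQstep k h1 (by omega))
        (fun k h1 h2 => (hQlev k h1 (by omega)).1)
        ?_ ?_ ?_
      · intro k h1 h2
        have := (hQlev k h1 (by omega)).1
        omega
      · intro k h1 h2 hnb
        obtain ⟨a1, a2⟩ := hQN1 k h1 (by omega) (hνsub hnb)
        exact ⟨k - 1, a1, by omega, a2⟩
      · intro k h1 h2 hnb
        obtain ⟨a1, a2⟩ := hQN2 k h1 (by omega) (hνsub hnb)
        by_cases hk : k + 1 ≤ P.1 - 1
        · exact ⟨k + 1, by omega, hk, a2⟩
        · exfalso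
          have hk1 : k + 1 = P.1 := by omega
          rw [hk1] at a2
          rw [← a2] at hnb
          exact hSPnot P.1 le_rfl hPint hnb
    · -- Q² = [P.2 + 1, Q.2]
      refine removes_construct hνptn BQ (by omega)
        (fun k h1 h2 => hmemν k (by omega) h2 (by omega))
        (fun k h1 h2 => hQcont k (by omega) h2)
        (fun k h1 h2 => hQstep k (by omega) (by omega))
        ?_
        (fun k h1 h2 => (hQlev k (by omega) h2).2)
        ?_ ?_
      · intro k h1 h2
        have := (hQlev k (by omega) h2).1
        omega
      · intro k h1 h2 hnb
        obtain ⟨a1, a2⟩ := hQN1 k (by omega) h2 (hνsub hnb)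
        by_cases hk : P.2 + 1 ≤ k - 1
        · exact ⟨k - 1, hk, by omega, a2⟩
        · exfalso
          have hk1 : k - 1 = P.2 := by omega
          rw [hk1] at a2
          rw [← a2] at hnb
          exact hSPnot P.2 hPint le_rfl hnb
      · intro k h1 h2 hnb
        obtain ⟨a1, a2⟩ := hQN2 k (by omega) h2 (hνsub hnb)
        exact ⟨k + 1, by omega, a1, a2⟩
  · -- non-commuting is violated : contradiction
    exfalso
    have hbig : ∀ k, P.1 ≤ k → k ≤ P.2 → 3 ≤ (BQ k).1 ∧ 3 ≤ (BQ k).2 := by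
      intro k h1 h2
      have hch1 := (chains hQstep k Q.2 (by omega) (by omega) le_rfl).1
      have hch2 := (chains hQstep Q.1 k le_rfl (by omega) (by omega)).2
      have hlk := hlevP k h1 h2
      obtain ⟨x1, x2, -⟩ := hQmem Q.1 le_rfl (by omega)
      obtain ⟨y1, y2, -⟩ := hQmem Q.2 (by omega) le_rfl
      omega
    -- the shifted path B' : Q with the segment over P moved one box inward
    set B' : ℤ → ℕ × ℕ :=
      fun k => if P.1 ≤ k ∧ k ≤ P.2 then ((BQ k).1 - 1, (BQ k).2 - 1) else BQ k with hB'def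
    have hB'i : ∀ k, P.1 ≤ k → k ≤ P.2 → B' k = ((BQ k).1 - 1, (BQ k).2 - 1) := by
      intro k h1 h2
      simp only [hB'def]
      rw [if_pos ⟨h1, h2⟩]
    have hB'o : ∀ k, (k < P.1 ∨ P.2 < k) → B' k = BQ k := by
      intro k h
      simp only [hB'def]
      rw [if_neg (by omega)]
    have hDRem1 : DRem m n ν Q.1 Q.2 := by
      refine removes_construct hνptn B' (by omega) ?_ ?_ ?_ ?_ ?_ ?_ ?_
      · -- membership
        intro k h1 h2
        by_cases hk : P.1 ≤ k ∧ k ≤ P.2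
        · rw [hB'i k hk.1 hk.2]
          have hb := hbig k hk.1 hk.2
          obtain ⟨m1, m2, m3⟩ := hQmem k h1 h2
          rw [hPdiag]
          constructor
          · exact diagram_dc hμ ⟨m1, m2, m3⟩ (by omega) (by omega) (by omega) (by omega)
          · rintro ⟨k', a1, a2, a3⟩
            rw [hagree k' a1 a2] at a3
            have e1 := hQcont k' (by omega) (by omega)
            rw [a3] at e1
            have e2 := hQcont k (by omega) (by omega)
            simp only [cont] at e1 e2
            have : k' = k := by omega
            subst this
            have f1 := congrArg Prod.fst a3
            dsimp only at f1
            omega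
        · rw [hB'o k (by omega)]
          exact hmemν k h1 h2 (by omega)
      · -- content
        intro k h1 h2
        by_cases hk : P.1 ≤ k ∧ k ≤ P.2
        · rw [hB'i k hk.1 hk.2]
          have hb := hbig k hk.1 hk.2
          have e2 := hQcont k (by omega) (by omega)
          simp only [cont] at e2 ⊢
          omega
        · rw [hB'o k (by omega)]
          exact hQcont k h1 h2
      · -- steps
        intro k h1 h2
        by_cases hkA : k < P.1 - 1
        · rw [hB'o k (by omega), hB'o (k + 1) (by omega)]
          exact hQstep k h1 h2
        by_cases hkB : k = P.1 - 1
        · subst hkB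
          rw [show P.1 - 1 + 1 = P.1 by ring]
          rw [hB'o (P.1 - 1) (by omega), hB'i P.1 le_rfl hPint]
          right
          have f1 : (BQ P.1).1 = (BQ (P.1 - 1)).1 + 1 := by rw [hF1]
          have f2 : (BQ P.1).2 = (BQ (P.1 - 1)).2 := by rw [hF1]
          have hb := hbig P.1 le_rfl hPint
          refine ⟨by omega, ?_⟩
          apply Prod.ext <;> (try dsimp only) <;> omega
        by_cases hkC : k ≤ P.2 - 1
        · rw [hB'i k (by omega) (by omega), hB'i (k + 1) (by omega) (by omega)]
          have hb := hbig k (by omega) (by omega)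
          rcases hQstep k h1 h2 with h | ⟨hh, h⟩
          · left
            have f1 : (BQ (k + 1)).1 = (BQ k).1 + 1 := by rw [h]
            have f2 : (BQ (k + 1)).2 = (BQ k).2 := by rw [h]
            apply Prod.ext <;> (try dsimp only) <;> omega
          · right
            have f1 : (BQ (k + 1)).1 = (BQ k).1 := by rw [h]
            have f2 : (BQ (k + 1)).2 = (BQ k).2 - 1 := by rw [h]
            refine ⟨by omega, ?_⟩
            apply Prod.ext <;> (try dsimp only) <;> omega
        by_cases hkD : k = P.2
        · subst hkD
          rw [hB'i P.2 hPint le_rfl, hB'o (P.2 + 1) (by omega)]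
          left
          have f1 : (BQ (P.2 + 1)).1 = (BQ P.2).1 := by rw [hF2.2]
          have f2 : (BQ (P.2 + 1)).2 = (BQ P.2).2 - 1 := by rw [hF2.2]
          have hb := hbig P.2 hPint le_rfl
          apply Prod.ext <;> (try dsimp only) <;> omega
        · rw [hB'o k (by omega), hB'o (k + 1) (by omega)]
          exact hQstep k h1 h2
      · -- min levels (first)
        intro k h1 h2
        rw [hB'o Q.1 (by omega)]
        by_cases hk : P.1 ≤ k ∧ k ≤ P.2
        · rw [hB'i k hk.1 hk.2]
          have hb := hbig k hk.1 hk.2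
          have hl := hlevP k hk.1 hk.2
          simp only [lev] at hcase hl ⊢
          omega
        · rw [hB'o k (by omega)]
          exact (hQlev k h1 h2).1
      · -- min levels (last)
        intro k h1 h2
        rw [hB'o Q.2 (by omega)]
        by_cases hk : P.1 ≤ k ∧ k ≤ P.2
        · rw [hB'i k hk.1 hk.2]
          have hb := hbig k hk.1 hk.2
          have hl := hlevP k hk.1 hk.2
          simp only [lev] at hcase hl hHq ⊢
          omega
        · rw [hB'o k (by omega)]
          have := (hQlev k h1 h2).1
          omega
      · -- right-closure in ν
        intro k h1 h2 hnb
        by_cases hk : P.1 ≤ k ∧ k ≤ P.2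
        · have hb := hbig k hk.1 hk.2
          have g1 : (B' k).1 = (BQ k).1 - 1 := by rw [hB'i k hk.1 hk.2]
          have g2 : (B' k).2 = (BQ k).2 - 1 := by rw [hB'i k hk.1 hk.2]
          have hx : ((B' k).1, (B' k).2 + 1) = ((BQ k).1 - 1, (BQ k).2) := by
            apply Prod.ext <;> (try dsimp only) <;> omega
          rw [hx] at hnb
          by_cases hkP : k = P.1
          · subst hkP
            have f1 : (BQ P.1).1 = (BQ (P.1 - 1)).1 + 1 := by rw [hF1]
            have f2 : (BQ P.1).2 = (BQ (P.1 - 1)).2 := by rw [hF1]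
            refine ⟨P.1 - 1, by omega, by omega, ?_⟩
            rw [hB'o (P.1 - 1) (by omega)]
            apply Prod.ext <;> (try dsimp only) <;> omega
          · have hst := hQstep (k - 1) (by omega) (by omega)
            rw [show k - 1 + 1 = k by ring] at hst
            rcases hst with h | ⟨hh, h⟩
            · exfalso
              have f1 : (BQ k).1 = (BQ (k - 1)).1 + 1 := by rw [h]
              have f2 : (BQ k).2 = (BQ (k - 1)).2 := by rw [h]
              have e : ((BQ k).1 - 1, (BQ k).2) = BQ (k - 1) := by
                apply Prod.ext <;> (try dsimp only) <;> omega
              rw [e] at hnb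
              exact hSPnot (k - 1) (by omega) (by omega) hnb
            · have f1 : (BQ k).1 = (BQ (k - 1)).1 := by rw [h]
              have f2 : (BQ k).2 = (BQ (k - 1)).2 - 1 := by rw [h]
              refine ⟨k - 1, by omega, by omega, ?_⟩
              rw [hB'i (k - 1) (by omega) (by omega)]
              apply Prod.ext <;> (try dsimp only) <;> omega
        by_cases hkE : k = P.2 + 1
        · exfalso
          subst hkE
          have hb := hbig P.2 hPint le_rfl
          have f1 : (BQ (P.2 + 1)).1 = (BQ P.2).1 := by rw [hF2.2]
          have f2 : (BQ (P.2 + 1)).2 = (BQ P.2).2 - 1 := by rw [hF2.2]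
          have hx : ((B' (P.2 + 1)).1, (B' (P.2 + 1)).2 + 1) = BQ P.2 := by
            rw [hB'o (P.2 + 1) (by omega)]
            apply Prod.ext <;> (try dsimp only) <;> omega
          rw [hx] at hnb
          exact hSPnot P.2 hPint le_rfl hnb
        · rw [hB'o k (by omega)] at hnb
          obtain ⟨a1, a2⟩ := hQN1 k h1 h2 (hνsub hnb)
          refine ⟨k - 1, a1, by omega, ?_⟩
          rw [hB'o (k - 1) (by omega), hB'o k (by omega)]
          exact a2
      · -- down-closure in ν
        intro k h1 h2 hnb
        by_cases hk : P.1 ≤ k ∧ k ≤ P.2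
        · have hb := hbig k hk.1 hk.2
          have g1 : (B' k).1 = (BQ k).1 - 1 := by rw [hB'i k hk.1 hk.2]
          have g2 : (B' k).2 = (BQ k).2 - 1 := by rw [hB'i k hk.1 hk.2]
          have hx : ((B' k).1 + 1, (B' k).2) = ((BQ k).1, (BQ k).2 - 1) := by
            apply Prod.ext <;> (try dsimp only) <;> omega
          rw [hx] at hnb
          by_cases hkP : k = P.2
          · subst hkP
            have f1 : (BQ (P.2 + 1)).1 = (BQ P.2).1 := by rw [hF2.2]
            have f2 : (BQ (P.2 + 1)).2 = (BQ P.2).2 - 1 := by rw [hF2.2]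
            refine ⟨P.2 + 1, by omega, by omega, ?_⟩
            rw [hB'o (P.2 + 1) (by omega)]
            apply Prod.ext <;> (try dsimp only) <;> omega
          · have hst := hQstep k (by omega) (by omega)
            rcases hst with h | ⟨hh, h⟩
            · have f1 : (BQ (k + 1)).1 = (BQ k).1 + 1 := by rw [h]
              have f2 : (BQ (k + 1)).2 = (BQ k).2 := by rw [h]
              refine ⟨k + 1, by omega, by omega, ?_⟩
              rw [hB'i (k + 1) (by omega) (by omega)]
              apply Prod.ext <;> (try dsimp only) <;> omega
            · exfalso
              have e : ((BQ k).1, (BQ k).2 - 1) = BQ (k + 1) := by rw [h]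
              rw [e] at hnb
              exact hSPnot (k + 1) (by omega) (by omega) hnb
        by_cases hkE : k = P.1 - 1
        · exfalso
          subst hkE
          have f1 : (BQ P.1).1 = (BQ (P.1 - 1)).1 + 1 := by rw [hF1]
          have f2 : (BQ P.1).2 = (BQ (P.1 - 1)).2 := by rw [hF1]
          have hx : ((B' (P.1 - 1)).1 + 1, (B' (P.1 - 1)).2) = BQ P.1 := by
            rw [hB'o (P.1 - 1) (by omega)]
            apply Prod.ext <;> (try dsimp only) <;> omega
          rw [hx] at hnb
          exact hSPnot P.1 le_rfl hPint hnb
        · rw [hB'o k (by omega)] at hnb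
          obtain ⟨a1, a2⟩ := hQN2 k h1 h2 (hνsub hnb)
          refine ⟨k + 1, by omega, a1, ?_⟩
          rw [hB'o (k + 1) (by omega), hB'o k (by omega)]
          exact a2
    -- second half of commuting : P is removable from μ - Q
    have hSQnot : ∀ k, Q.1 ≤ k → k ≤ Q.2 → BQ k ∉ diagram νQ := by
      intro k h1 h2 hmem'
      rw [hQdiag] at hmem'
      exact hmem'.2 ⟨k, h1, h2, rfl⟩
    have hνQsub : diagram νQ ⊆ diagram μ := by rw [hQdiag]; exact Set.diff_subset
    set B'' : ℤ → ℕ × ℕ := fun k => ((BQ k).1 - 1, (BQ k).2 - 1) with hB''def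
    have hDRem2 : DRem m n νQ P.1 P.2 := by
      refine removes_construct hνQptn B'' hPint ?_ ?_ ?_ ?_ ?_ ?_ ?_
      · -- membership
        intro k h1 h2
        have hb := hbig k h1 h2
        obtain ⟨m1, m2, m3⟩ := hQmem k (by omega) (by omega)
        rw [hQdiag]
        simp only [hB''def]
        constructor
        · exact diagram_dc hμ ⟨m1, m2, m3⟩ (by dsimp only; omega) (by dsimp only; omega)
            (by dsimp only; omega) (by dsimp only; omega)
        · rintro ⟨k', a1, a2, a3⟩
          apply hQout k' a1 a2
          have f1 : (BQ k').1 = (BQ k).1 - 1 := by rw [a3]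
          have f2 : (BQ k').2 = (BQ k).2 - 1 := by rw [a3]
          have e : ((BQ k').1 + 1, (BQ k').2 + 1) = BQ k := by
            apply Prod.ext <;> (try dsimp only) <;> omega
          rw [e]
          exact ⟨m1, m2, m3⟩
      · -- content
        intro k h1 h2
        have hb := hbig k h1 h2
        have e2 := hQcont k (by omega) (by omega)
        simp only [hB''def, cont] at e2 ⊢
        omega
      · -- steps
        intro k h1 h2
        have hb := hbig k (by omega) (by omega)
        simp only [hB''def]
        rcases hQstep k (by omega) (by omega) with h | ⟨hh, h⟩
        · left
          have f1 : (BQ (k + 1)).1 = (BQ k).1 + 1 := by rw [h]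
          have f2 : (BQ (k + 1)).2 = (BQ k).2 := by rw [h]
          apply Prod.ext <;> (try dsimp only) <;> omega
        · right
          have f1 : (BQ (k + 1)).1 = (BQ k).1 := by rw [h]
          have f2 : (BQ (k + 1)).2 = (BQ k).2 - 1 := by rw [h]
          refine ⟨by (try dsimp only); omega, ?_⟩
          apply Prod.ext <;> (try dsimp only) <;> omega
      · -- min levels (first)
        intro k h1 h2
        have hb := hbig k h1 h2
        have hb1 := hbig P.1 le_rfl hPint
        have hl := hlevP k h1 h2
        simp only [hB''def, lev] at hl ⊢
        omega
      · -- min levels (last)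
        intro k h1 h2
        have hb := hbig k h1 h2
        have hb2 := hbig P.2 hPint le_rfl
        have hl := hlevP k h1 h2
        simp only [hB''def, lev] at hl hHpq ⊢
        omega
      · -- right-closure in νQ
        intro k h1 h2 hnb
        have hb := hbig k h1 h2
        have hx : ((B'' k).1, (B'' k).2 + 1) = ((BQ k).1 - 1, (BQ k).2) := by
          simp only [hB''def]
          apply Prod.ext <;> (try dsimp only) <;> omega
        rw [hx] at hnb
        by_cases hkP : k = P.1
        · exfalso
          subst hkP
          have f1 : (BQ P.1).1 = (BQ (P.1 - 1)).1 + 1 := by rw [hF1]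
          have f2 : (BQ P.1).2 = (BQ (P.1 - 1)).2 := by rw [hF1]
          have e : ((BQ P.1).1 - 1, (BQ P.1).2) = BQ (P.1 - 1) := by
            apply Prod.ext <;> (try dsimp only) <;> omega
          rw [e] at hnb
          exact hSQnot (P.1 - 1) (by omega) (by omega) hnb
        · have hst := hQstep (k - 1) (by omega) (by omega)
          rw [show k - 1 + 1 = k by ring] at hst
          rcases hst with h | ⟨hh, h⟩
          · exfalso
            have f1 : (BQ k).1 = (BQ (k - 1)).1 + 1 := by rw [h]
            have f2 : (BQ k).2 = (BQ (k - 1)).2 := by rw [h]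
            have e : ((BQ k).1 - 1, (BQ k).2) = BQ (k - 1) := by
              apply Prod.ext <;> (try dsimp only) <;> omega
            rw [e] at hnb
            exact hSQnot (k - 1) (by omega) (by omega) hnb
          · have f1 : (BQ k).1 = (BQ (k - 1)).1 := by rw [h]
            have f2 : (BQ k).2 = (BQ (k - 1)).2 - 1 := by rw [h]
            refine ⟨k - 1, by omega, by omega, ?_⟩
            simp only [hB''def]
            apply Prod.ext <;> (try dsimp only) <;> omega
      · -- down-closure in νQ
        intro k h1 h2 hnb
        have hb := hbig k h1 h2
        have hx : ((B'' k).1 + 1, (B'' k).2) = ((BQ k).1, (BQ k).2 - 1) := by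
          simp only [hB''def]
          apply Prod.ext <;> (try dsimp only) <;> omega
        rw [hx] at hnb
        by_cases hkP : k = P.2
        · exfalso
          subst hkP
          have e : ((BQ P.2).1, (BQ P.2).2 - 1) = BQ (P.2 + 1) := by rw [hF2.2]
          rw [e] at hnb
          exact hSQnot (P.2 + 1) (by omega) (by omega) hnb
        · have hst := hQstep k (by omega) (by omega)
          rcases hst with h | ⟨hh, h⟩
          · have f1 : (BQ (k + 1)).1 = (BQ k).1 + 1 := by rw [h]
            have f2 : (BQ (k + 1)).2 = (BQ k).2 := by rw [h]
            refine ⟨k + 1, by omega, by omega, ?_⟩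
            simp only [hB''def]
            apply Prod.ext <;> (try dsimp only) <;> omega
          · exfalso
            have e : ((BQ k).1, (BQ k).2 - 1) = BQ (k + 1) := by rw [h]
            rw [e] at hnb
            exact hSQnot (k + 1) (by omega) (by omega) hnb
    exact hnc ⟨⟨ν, hν, hDRem1⟩, ⟨νQ, hQrem, hDRem2⟩⟩
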